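/- Let m ≥ 1 and G = ⟨a, b | a^(2^m) = b³ = 1, a⁻¹ba = b⁻¹⟩, a group of order 3·2^m. Then for every prime-power divisor n of the exponent of G, the number of elements g in G with g^n = 1 is at most 2n. -/

import Mathlib

theorem stmt_17 (m : ℕ) (hm : 1 ≤ m) (G : Type*) [Group G] [Finite G] (a b : G)
    (hcard : Nat.card G = 3 * 2 ^ m)
    (ha : orderOf a = 2 ^ m) (hb : orderOf b = 3)
    (hrel : a⁻¹ * b * a = b⁻¹)
    (hgen : Subgroup.closure {a, b} = ⊤) :
    ∀ n : ℕ, IsPrimePow n → n ∣ Monoid.exponent G →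
      Nat.card {g : G | g ^ n = 1} ≤ 2 * n := by
  -- basic conjugation facts
  have h0 : a * b⁻¹ * a⁻¹ = b := by rw [← hrel]; group
  have hab : a * b * a⁻¹ = b⁻¹ := by
    calc a * b * a⁻¹ = (a * b⁻¹ * a⁻¹)⁻¹ := by group
    _ = b⁻¹ := by rw [h0]
  have hcomm2 : Commute (a ^ (2:ℤ)) b := by
    have h : a ^ (2:ℤ) * b * (a ^ (2:ℤ))⁻¹ = b := by
      rw [zpow_two]
      calc a * a * b * (a * a)⁻¹ = a * (a * b * a⁻¹) * a⁻¹ := by group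
      _ = a * b⁻¹ * a⁻¹ := by rw [hab]
      _ = b := h0
    exact mul_inv_eq_iff_eq_mul.mp h
  -- iterated zpow helper
  have hzz : ∀ (x : G) (i : ℤ) (N : ℕ), (x ^ i) ^ N = x ^ (i * (N:ℤ)) := by
    intro x i N
    rw [← zpow_natCast (x ^ i) N, ← zpow_mul]
  -- conjugation by even/odd powers of a
  have hconj_even : ∀ t j : ℤ, a ^ (2*t) * b ^ j * (a ^ (2*t))⁻¹ = b ^ j := by
    intro t j
    have hc : Commute (a ^ (2*t)) (b ^ j) := by
      rw [zpow_mul]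
      exact (hcomm2.zpow_left t).zpow_right j
    rw [hc.eq, mul_inv_cancel_right]
  have hconj_odd : ∀ t j : ℤ, a ^ (2*t+1) * b ^ j * (a ^ (2*t+1))⁻¹ = b ^ (-j) := by
    intro t j
    have h1 : a ^ (2*t+1) * b * (a ^ (2*t+1))⁻¹ = b⁻¹ := by
      have hc : Commute (a ^ (2*t)) b⁻¹ := by
        rw [zpow_mul]; exact (hcomm2.zpow_left t).inv_right
      calc a ^ (2*t+1) * b * (a ^ (2*t+1))⁻¹
          = a ^ (2*t) * (a * b * a⁻¹) * (a ^ (2*t))⁻¹ := by rw [zpow_add, zpow_one]; group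
      _ = a ^ (2*t) * b⁻¹ * (a ^ (2*t))⁻¹ := by rw [hab]
      _ = b⁻¹ := by rw [hc.eq, mul_inv_cancel_right]
    calc a ^ (2*t+1) * b ^ j * (a ^ (2*t+1))⁻¹
        = (a ^ (2*t+1) * b * (a ^ (2*t+1))⁻¹) ^ j := by rw [conj_zpow]
    _ = (b⁻¹) ^ j := by rw [h1]
    _ = b ^ (-j) := by rw [inv_zpow, zpow_neg]
  -- separation: coprime orders
  have hsep : ∀ j i : ℤ, b ^ j = a ^ i → b ^ j = 1 ∧ a ^ i = 1 := by
    intro j i hji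
    have hb3 : b ^ (((3:ℕ)):ℤ) = 1 := by
      rw [zpow_natCast, ← hb, pow_orderOf_eq_one]
    have ham : a ^ (((2 ^ m:ℕ)):ℤ) = 1 := by
      rw [zpow_natCast, ← ha, pow_orderOf_eq_one]
    have h3 : (b ^ j) ^ (3:ℕ) = 1 := by
      rw [hzz, mul_comm, zpow_mul, hb3, one_zpow]
    have h2 : (b ^ j) ^ (2 ^ m) = 1 := by
      rw [hji, hzz, mul_comm, zpow_mul, ham, one_zpow]
    have hd1 : orderOf (b ^ j) ∣ 3 := orderOf_dvd_of_pow_eq_one h3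
    have hd2 : orderOf (b ^ j) ∣ 2 ^ m := orderOf_dvd_of_pow_eq_one h2
    have hcop : Nat.Coprime 3 (2 ^ m) := Nat.Coprime.pow_right _ (by norm_num)
    have h1 : orderOf (b ^ j) ∣ 1 := hcop ▸ Nat.dvd_gcd hd1 hd2
    have hbj : b ^ j = 1 := orderOf_eq_one_iff.mp (Nat.dvd_one.mp h1)
    exact ⟨hbj, by rw [← hji, hbj]⟩
  -- decomposition g = b^j * a^i
  have hdecomp : ∀ g : G, ∃ j i : ℤ, g = b ^ j * a ^ i := by
    intro g
    have hg : g ∈ Subgroup.closure {a, b} := hgen ▸ Subgroup.mem_top g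
    induction hg using Subgroup.closure_induction with
    | mem x hx =>
      rcases hx with rfl | rfl
      · exact ⟨0, 1, by simp⟩
      · exact ⟨1, 0, by simp⟩
    | one => exact ⟨0, 0, by simp⟩
    | mul x y hx hy ihx ihy =>
      obtain ⟨j, i, rfl⟩ := ihx
      obtain ⟨j', i', rfl⟩ := ihy
      rcases Int.even_or_odd i with ⟨t, ht⟩ | ⟨t, ht⟩
      · refine ⟨j + j', i + i', ?_⟩
        have hc : a ^ i * b ^ j' * (a ^ i)⁻¹ = b ^ j' := by
          rw [ht, ← two_mul]; exact hconj_even t j'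
        calc b ^ j * a ^ i * (b ^ j' * a ^ i')
            = b ^ j * (a ^ i * b ^ j' * (a ^ i)⁻¹) * (a ^ i * a ^ i') := by group
        _ = b ^ j * b ^ j' * (a ^ i * a ^ i') := by rw [hc]
        _ = b ^ (j + j') * a ^ (i + i') := by rw [zpow_add, zpow_add]
      · refine ⟨j + (-j'), i + i', ?_⟩
        have hc : a ^ i * b ^ j' * (a ^ i)⁻¹ = b ^ (-j') := by
          rw [ht]; exact hconj_odd t j'
        calc b ^ j * a ^ i * (b ^ j' * a ^ i')
            = b ^ j * (a ^ i * b ^ j' * (a ^ i)⁻¹) * (a ^ i * a ^ i') := by group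
        _ = b ^ j * b ^ (-j') * (a ^ i * a ^ i') := by rw [hc]
        _ = b ^ (j + (-j')) * a ^ (i + i') := by rw [zpow_add, zpow_add]
    | inv x hx ihx =>
      obtain ⟨j, i, rfl⟩ := ihx
      rcases Int.even_or_odd i with ⟨t, ht⟩ | ⟨t, ht⟩
      · refine ⟨-j, -i, ?_⟩
        have hc : a ^ (-i) * b ^ (-j) * (a ^ (-i))⁻¹ = b ^ (-j) := by
          have h2 : -i = 2 * (-t) := by omega
          rw [h2]; exact hconj_even (-t) (-j)
        calc (b ^ j * a ^ i)⁻¹ = a ^ (-i) * b ^ (-j) * (a ^ (-i))⁻¹ * a ^ (-i) := by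
              rw [zpow_neg, zpow_neg]; group
        _ = b ^ (-j) * a ^ (-i) := by rw [hc]
      · refine ⟨j, -i, ?_⟩
        have hc : a ^ (-i) * b ^ (-j) * (a ^ (-i))⁻¹ = b ^ j := by
          have h2 : -i = 2 * (-t - 1) + 1 := by omega
          rw [h2, hconj_odd (-t-1) (-j), neg_neg]
        calc (b ^ j * a ^ i)⁻¹ = a ^ (-i) * b ^ (-j) * (a ^ (-i))⁻¹ * a ^ (-i) := by
              rw [zpow_neg, zpow_neg]; group
        _ = b ^ j * a ^ (-i) := by rw [hc]
  -- square of odd-form elements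
  have hsq_odd : ∀ (j t : ℤ), (b ^ j * a ^ (2*t+1)) ^ (2:ℕ) = a ^ (2*(2*t+1)) := by
    intro j t
    have hc := hconj_odd t j
    calc (b ^ j * a ^ (2*t+1)) ^ (2:ℕ)
        = b ^ j * (a ^ (2*t+1) * b ^ j * (a ^ (2*t+1))⁻¹) * (a ^ (2*t+1) * a ^ (2*t+1)) := by
          rw [pow_two]; group
    _ = b ^ j * b ^ (-j) * (a ^ (2*t+1) * a ^ (2*t+1)) := by rw [hc]
    _ = a ^ (2*(2*t+1)) := by
          rw [← zpow_add, add_neg_cancel, zpow_zero, one_mul, ← zpow_add]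
          congr 1
          ring
  -- main argument
  intro n hn hdvd
  obtain ⟨p, k, hp, hk, rfl⟩ := hn
  rw [← Nat.prime_iff] at hp
  have hdvdcard : p ^ k ∣ 3 * 2 ^ m := by
    calc p ^ k ∣ Monoid.exponent G := hdvd
    _ ∣ Nat.card G := Group.exponent_dvd_nat_card
    _ = 3 * 2 ^ m := hcard
  have hp2or3 : p = 3 ∨ p = 2 := by
    have hpd : p ∣ 3 * 2 ^ m := (dvd_pow_self p hk.ne').trans hdvdcard
    rcases (Nat.Prime.dvd_mul hp).mp hpd with h | h
    · left; exact (Nat.prime_dvd_prime_iff_eq hp Nat.prime_three).mp h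
    · right; exact (Nat.prime_dvd_prime_iff_eq hp Nat.prime_two).mp (hp.dvd_of_dvd_pow h)
  -- helper for ℤ-divisibility extraction
  have hza : ∀ i : ℤ, a ^ i = 1 ↔ ((2:ℤ) ^ m ∣ i) := by
    intro i
    rw [← orderOf_dvd_iff_zpow_eq_one, ha]
    push_cast
    rfl
  have hzb : ∀ j : ℤ, b ^ j = 1 ↔ ((3:ℤ) ∣ j) := by
    intro j
    rw [← orderOf_dvd_iff_zpow_eq_one, hb]
    norm_num
  have hcop23 : IsCoprime ((2:ℤ) ^ m) 3 := by
    apply IsCoprime.pow_left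
    norm_num
  rcases hp2or3 with rfl | rfl
  · -- p = 3, so k = 1, n = 3
    have hk1 : k = 1 := by
      have hcop : Nat.Coprime (3 ^ k) (2 ^ m) :=
        (Nat.Coprime.pow_left k (by norm_num)).pow_right m
      have h3 : 3 ^ k ∣ 3 := hcop.dvd_of_dvd_mul_right hdvdcard
      have h3' := Nat.le_of_dvd (by norm_num) h3
      have h3'' : 3 ^ k ≤ 3 ^ 1 := by simpa using h3'
      have hkle := (Nat.pow_le_pow_iff_right (by norm_num : 1 < 3)).mp h3''
      omega
    subst hk1
    -- solutions lie in zpowers b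
    have hsub : {g : G | g ^ 3 ^ 1 = 1} ⊆ (Subgroup.zpowers b : Set G) := by
      intro g hg
      simp only [Set.mem_setOf_eq, pow_one] at hg
      obtain ⟨j, i, rfl⟩ := hdecomp g
      rcases Int.even_or_odd i with ⟨t, ht⟩ | ⟨t, ht⟩
      · -- even case
        have hi2t : i = 2 * t := by omega
        have hc : Commute (b ^ j) (a ^ i) := by
          have h' := hconj_even t j
          rw [← hi2t] at h'
          exact (mul_inv_eq_iff_eq_mul.mp h').symm
        have heqn : (b ^ j) ^ (3:ℕ) * (a ^ i) ^ (3:ℕ) = 1 := by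
          rw [← hc.mul_pow]; exact hg
        have hBA : b ^ (j * ((3:ℕ):ℤ)) * a ^ (i * ((3:ℕ):ℤ)) = 1 := by
          rw [← hzz, ← hzz]; exact heqn
        have heq2 : b ^ (j * ((3:ℕ):ℤ)) = a ^ (-(i * ((3:ℕ):ℤ))) := by
          rw [zpow_neg]; exact eq_inv_of_mul_eq_one_left hBA
        obtain ⟨-, hA⟩ := hsep _ _ heq2
        have hdvd3i : (2:ℤ) ^ m ∣ i * 3 := by
          have h' := dvd_neg.mp ((hza _).mp hA)
          simpa using h'
        have hdvdi : (2:ℤ) ^ m ∣ i := hcop23.dvd_of_dvd_mul_right hdvd3i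
        have hai : a ^ i = 1 := (hza i).mpr hdvdi
        rw [hai, mul_one]
        exact Subgroup.zpow_mem_zpowers b j
      · -- odd case: contradiction
        exfalso
        have h2 : (b ^ j * a ^ i) ^ (2:ℕ) = a ^ (2*i) := by
          rw [ht]; exact hsq_odd j t
        have h3 : (b ^ j * a ^ i) ^ (3:ℕ) = b ^ j * a ^ (3*i) := by
          have hstep : (b ^ j * a ^ i) ^ (3:ℕ) = (b ^ j * a ^ i) ^ (2:ℕ) * (b ^ j * a ^ i) := by
            rw [show (3:ℕ) = 2 + 1 from rfl, pow_succ]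
          rw [hstep, h2]
          have hc := hconj_even i j
          calc a ^ (2*i) * (b ^ j * a ^ i)
              = (a ^ (2*i) * b ^ j * (a ^ (2*i))⁻¹) * (a ^ (2*i) * a ^ i) := by group
          _ = b ^ j * (a ^ (2*i) * a ^ i) := by rw [hc]
          _ = b ^ j * a ^ (3*i) := by rw [← zpow_add]; congr 1; ring
        rw [h3] at hg
        have heq2 : b ^ j = a ^ (-(3*i)) := by
          rw [zpow_neg]
          exact eq_inv_of_mul_eq_one_left hg
        obtain ⟨-, hA⟩ := hsep _ _ heq2
        have hdvd3i : (2:ℤ) ^ m ∣ i * 3 := by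
          have h' := dvd_neg.mp ((hza _).mp hA)
          rw [mul_comm] at h'
          exact h'
        have hdvdi : (2:ℤ) ^ m ∣ i := hcop23.dvd_of_dvd_mul_right hdvd3i
        have h2i : (2:ℤ) ∣ i := dvd_trans (dvd_pow_self 2 (by omega : m ≠ 0)) hdvdi
        omega
    calc Nat.card {g : G | g ^ 3 ^ 1 = 1} ≤ Nat.card (Subgroup.zpowers b : Set G) :=
          Nat.card_mono (Set.toFinite _) hsub
    _ = orderOf b := by rw [SetLike.coe_sort_coe, Nat.card_zpowers]
    _ ≤ 2 * 3 ^ 1 := by rw [hb]; norm_num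
  · -- p = 2, k ≤ m
    have hkm : k ≤ m := by
      have hcop : Nat.Coprime (2 ^ k) 3 := Nat.Coprime.pow_left _ (by norm_num)
      have h2 : 2 ^ k ∣ 2 ^ m := hcop.dvd_of_dvd_mul_left hdvdcard
      exact (Nat.pow_dvd_pow_iff_le_right (by norm_num : 1 < 2)).mp h2
    rcases lt_or_eq_of_le hkm with hklt | hkm'
    · -- k < m : solutions lie in zpowers (a ^ 2^(m-k))
      have hsub : {g : G | g ^ 2 ^ k = 1} ⊆ (Subgroup.zpowers (a ^ 2 ^ (m-k)) : Set G) := by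
        intro g hg
        simp only [Set.mem_setOf_eq] at hg
        obtain ⟨j, i, rfl⟩ := hdecomp g
        have hdvd_i : ∀ i' : ℤ, a ^ (i' * ((2:ℤ) ^ k)) = 1 → (2:ℤ) ^ (m-k) ∣ i' := by
          intro i' h1
          have hd : (2:ℤ) ^ m ∣ i' * 2 ^ k := (hza _).mp h1
          have hsplit : (2:ℤ) ^ m = 2 ^ (m-k) * 2 ^ k := by
            rw [← pow_add]; congr 1; omega
          rw [hsplit] at hd
          exact (mul_dvd_mul_iff_right (by positivity : ((2:ℤ) ^ k) ≠ 0)).mp hd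
        rcases Int.even_or_odd i with ⟨t, ht⟩ | ⟨t, ht⟩
        · have hi2t : i = 2 * t := by omega
          have hc : Commute (b ^ j) (a ^ i) := by
            have h' := hconj_even t j
            rw [← hi2t] at h'
            exact (mul_inv_eq_iff_eq_mul.mp h').symm
          have heqn : (b ^ j) ^ (2 ^ k) * (a ^ i) ^ (2 ^ k) = 1 := by
            rw [← hc.mul_pow]; exact hg
          have hBA : b ^ (j * ((2 ^ k:ℕ):ℤ)) * a ^ (i * ((2 ^ k:ℕ):ℤ)) = 1 := by
            rw [← hzz, ← hzz]; exact heqn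
          have heq2 : b ^ (j * ((2 ^ k:ℕ):ℤ)) = a ^ (-(i * ((2 ^ k:ℕ):ℤ))) := by
            rw [zpow_neg]; exact eq_inv_of_mul_eq_one_left hBA
          obtain ⟨hB, hA⟩ := hsep _ _ heq2
          have hai : a ^ (i * ((2:ℤ) ^ k)) = 1 := by
            have h' := dvd_neg.mp ((hza _).mp hA)
            rw [hza]
            convert h' using 2
            · rfl
            push_cast
            rfl
          have hdi : (2:ℤ) ^ (m-k) ∣ i := hdvd_i i hai
          have hbj : b ^ j = 1 := by
            rw [hzb] at hB ⊢
            have hcop : IsCoprime ((3:ℤ)) (((2 ^ k:ℕ):ℤ)) := by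
              push_cast
              apply IsCoprime.pow_right
              norm_num
            exact hcop.dvd_of_dvd_mul_right hB
          rw [hbj, one_mul]
          obtain ⟨s, rfl⟩ := hdi
          rw [SetLike.mem_coe, zpow_mul]
          have h'' : a ^ ((2:ℤ) ^ (m-k)) = a ^ (2 ^ (m-k) : ℕ) := by
            rw [← zpow_natCast]; push_cast; rfl
          rw [h'']
          exact Subgroup.zpow_mem_zpowers _ s
        · exfalso
          have h2 : (b ^ j * a ^ i) ^ (2:ℕ) = a ^ (2*i) := by
            rw [ht]; exact hsq_odd j t
          have hgk : (b ^ j * a ^ i) ^ (2 ^ k) = a ^ (i * ((2:ℤ) ^ k)) := by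
            have hks : 2 ^ k = 2 * 2 ^ (k-1) := by
              rw [← pow_succ']; congr 1; omega
            have hkz : (2:ℤ) ^ k = 2 * 2 ^ (k-1) := by
              rw [← pow_succ']; congr 1; omega
            rw [hks, pow_mul, h2, hzz]
            congr 1
            push_cast
            rw [hkz]
            ring
          rw [hgk] at hg
          have hdi : (2:ℤ) ^ (m-k) ∣ i := hdvd_i i hg
          have h2i : (2:ℤ) ∣ i := dvd_trans (dvd_pow_self 2 (by omega : m - k ≠ 0)) hdi
          omega
      calc Nat.card {g : G | g ^ 2 ^ k = 1}
          ≤ Nat.card (Subgroup.zpowers (a ^ 2 ^ (m-k)) : Set G) :=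
            Nat.card_mono (Set.toFinite _) hsub
      _ = orderOf (a ^ 2 ^ (m-k)) := by rw [SetLike.coe_sort_coe, Nat.card_zpowers]
      _ = 2 ^ k := by
          rw [orderOf_pow, ha]
          rw [Nat.gcd_eq_right (pow_dvd_pow 2 (by omega : m - k ≤ m))]
          rw [Nat.pow_div (by omega) (by norm_num)]
          congr 1
          omega
      _ ≤ 2 * 2 ^ k := by omega
    · -- k = k : count the complement
      subst hkm'
      set S : Set G := {g : G | g ^ 2 ^ k = 1} with hS
      have hf : ∀ (j t : ℕ), j < 2 → b ^ (j+1) * (a ^ 2) ^ t ∈ Sᶜ := by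
        intro j t hj
        simp only [Set.mem_compl_iff, hS, Set.mem_setOf_eq]
        intro hcon
        have hc : Commute (b ^ (j+1)) ((a ^ 2) ^ t) := by
          have h' := hconj_even (t : ℤ) ((j:ℤ)+1)
          have he : a ^ ((2:ℤ) * (t:ℤ)) = (a ^ 2) ^ t := by
            rw [zpow_mul]; norm_cast
          rw [he] at h'
          have hbe : b ^ ((j:ℤ)+1) = b ^ (j+1) := by
            rw [← zpow_natCast b (j+1)]; push_cast; ring_nf
          rw [hbe] at h'
          exact (mul_inv_eq_iff_eq_mul.mp h').symm
        rw [hc.mul_pow] at hcon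
        have hA : ((a ^ 2) ^ t) ^ (2 ^ k) = 1 := by
          rw [← pow_mul, ← pow_mul, ← orderOf_dvd_iff_pow_eq_one, ha]
          exact ⟨2 * t, by ring⟩
        rw [hA, mul_one] at hcon
        have h3d : (3:ℕ) ∣ (j+1) * 2 ^ k := by
          rw [← hb]
          exact orderOf_dvd_of_pow_eq_one (by rw [pow_mul]; exact hcon)
        have hcop : Nat.Coprime 3 (2 ^ k) := Nat.Coprime.pow_right _ (by norm_num)
        have h3j : (3:ℕ) ∣ (j+1) := hcop.dvd_of_dvd_mul_right h3d
        omega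
      -- injective map into the complement
      have hinj : Function.Injective
          (fun p : Fin 2 × Fin (2 ^ (k-1)) =>
            (⟨b ^ ((p.1 : ℕ)+1) * (a ^ 2) ^ (p.2 : ℕ),
              hf _ _ p.1.isLt⟩ : ↥(Sᶜ))) := by
        intro ⟨j, t⟩ ⟨j', t'⟩ hpq
        simp only [Subtype.mk_eq_mk] at hpq
        have hb1 : ∀ u : ℕ, b ^ (((u:ℕ):ℤ)+1) = b ^ (u+1) := by
          intro u; rw [← zpow_natCast b (u+1)]; push_cast; ring_nf
        have ha1 : ∀ u : ℕ, a ^ ((2:ℤ)*((u:ℕ):ℤ)) = (a ^ 2) ^ u := by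
          intro u; rw [zpow_mul]; norm_cast
        have key : (b ^ ((j':ℕ)+1))⁻¹ * b ^ ((j:ℕ)+1)
            = (a ^ 2) ^ ((t':ℕ)) * ((a ^ 2) ^ ((t:ℕ)))⁻¹ := by
          calc (b ^ ((j':ℕ)+1))⁻¹ * b ^ ((j:ℕ)+1)
              = (b ^ ((j':ℕ)+1))⁻¹ * (b ^ ((j:ℕ)+1) * (a ^ 2) ^ ((t:ℕ)))
                  * ((a ^ 2) ^ ((t:ℕ)))⁻¹ := by group
          _ = (b ^ ((j':ℕ)+1))⁻¹ * (b ^ ((j':ℕ)+1) * (a ^ 2) ^ ((t':ℕ)))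
                  * ((a ^ 2) ^ ((t:ℕ)))⁻¹ := by rw [hpq]
          _ = (a ^ 2) ^ ((t':ℕ)) * ((a ^ 2) ^ ((t:ℕ)))⁻¹ := by group
        have heq : b ^ (((j:ℕ):ℤ) - ((j':ℕ):ℤ)) = a ^ (2*((t':ℕ):ℤ) - 2*((t:ℕ):ℤ)) := by
          have e1 : b ^ (((j:ℕ):ℤ) - ((j':ℕ):ℤ)) = (b ^ ((j':ℕ)+1))⁻¹ * b ^ ((j:ℕ)+1) := by
            rw [← hb1, ← hb1, ← zpow_neg, ← zpow_add]
            congr 1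
            ring
          have e2 : a ^ (2*((t':ℕ):ℤ) - 2*((t:ℕ):ℤ))
              = (a ^ 2) ^ ((t':ℕ)) * ((a ^ 2) ^ ((t:ℕ)))⁻¹ := by
            rw [sub_eq_add_neg, ← ha1, ← ha1, ← zpow_neg, ← zpow_add]
          rw [e1, e2, key]
        obtain ⟨hB, hA⟩ := hsep _ _ heq
        rw [hzb] at hB
        rw [hza] at hA
        have hj : (j:ℕ) < 2 := j.isLt
        have hj' : (j':ℕ) < 2 := j'.isLt
        have htl : (t:ℕ) < 2 ^ (k-1) := t.isLt
        have htl' : (t':ℕ) < 2 ^ (k-1) := t'.isLt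
        have hjj : ((j:ℕ):ℤ) = ((j':ℕ):ℤ) := by
          have hz := Int.eq_zero_of_abs_lt_dvd hB (by
            rw [abs_lt]
            constructor <;> omega)
          omega
        have htt : ((t:ℕ):ℤ) = ((t':ℕ):ℤ) := by
          have h2m : (2:ℤ) ^ k = 2 * 2 ^ (k-1) := by
            rw [← pow_succ']; congr 1; omega
          have hbt : ((t:ℕ):ℤ) < 2 ^ (k-1) := by exact_mod_cast htl
          have hbt' : ((t':ℕ):ℤ) < 2 ^ (k-1) := by exact_mod_cast htl'
          have hlt : |2*((t':ℕ):ℤ) - 2*((t:ℕ):ℤ)| < 2 ^ k := by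
            rw [abs_lt]
            constructor <;> omega
          have hz := Int.eq_zero_of_abs_lt_dvd hA hlt
          omega
        have hjn : (j:ℕ) = (j':ℕ) := by omega
        have htn : (t:ℕ) = (t':ℕ) := by omega
        exact Prod.ext (Fin.ext hjn) (Fin.ext htn)
      have hcompl : 2 ^ k ≤ Nat.card ↥(Sᶜ) := by
        have hle : Nat.card (Fin 2 × Fin (2 ^ (k-1))) ≤ Nat.card ↥(Sᶜ) :=
          Nat.card_le_card_of_injective _ hinj
        have hcardP : Nat.card (Fin 2 × Fin (2 ^ (k-1))) = 2 ^ k := by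
          simp [Nat.card_eq_fintype_card]
          rw [← pow_succ']
          congr 1
          omega
        exact hcardP ▸ hle
      have hsum : Nat.card ↥S + Nat.card ↥(Sᶜ) = 3 * 2 ^ k := by
        rw [Nat.card_coe_set_eq, Nat.card_coe_set_eq, Set.ncard_add_ncard_compl, hcard]
      omega
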